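/- The classifier h defined by h(x) = − for x ∈ A and h(x) = the opposite of y(x) for x ∈ B (predicting the unfavourable class on the whole privileged group and the wrong label on every instance of the unprivileged group) satisfies Acc(h) = Neg(A)/|D| and SPD(h) = −1 + Pos(B)/|B|. This realises the fourth vertex of the octagon of Proposition 1. -/

import Mathlib

open Finset

variable {α : Type*} [DecidableEq α]

/-- Number of instances in `S` whose true label is the favourable class `+`. -/
def PosCount (y : α → Bool) (S : Finset α) : ℕ := (S.filter fun x => y x = true).card

/-- Number of instances in `S` whose true label is the unfavourable class `−`. -/
def NegCount (y : α → Bool) (S : Finset α) : ℕ := (S.filter fun x => y x = false).card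

/-- Predicted favourable rate of classifier `h` on `S`. -/
noncomputable def pPlus (h : α → Bool) (S : Finset α) : ℝ :=
  (S.filter fun x => h x = true).card / S.card

/-- Predicted unfavourable rate of classifier `h` on `S`. -/
noncomputable def pMinus (h : α → Bool) (S : Finset α) : ℝ :=
  (S.filter fun x => h x = false).card / S.card

/-- Accuracy of classifier `h` on dataset `D` with ground truth `y`. -/
noncomputable def Accuracy (y : α → Bool) (D : Finset α) (h : α → Bool) : ℝ :=
  (D.filter fun x => h x = y x).card / D.card

/-- Statistical Parity Difference of classifier `h`, privileged group `A`,
unprivileged group `D \ A`. -/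
noncomputable def SPD (D A : Finset α) (h : α → Bool) : ℝ :=
  pPlus h A - pPlus h (D \ A)

/-- unfavourable on all of `A`, wrong label on all of `B = D \ A`:
fourth vertex of the octagon. -/
theorem octagon_vertex_four (D A : Finset α) (y : α → Bool)
    (hSub : A ⊆ D) (hD : D.Nonempty) (hA : A.Nonempty) (hB : (D \ A).Nonempty)
    (h : α → Bool)
    (hhA : ∀ x ∈ A, h x = false) (hhB : ∀ x ∈ D \ A, h x = !(y x)) :
    Accuracy y D h = (NegCount y A : ℝ) / D.card ∧
    SPD D A h = -1 + (PosCount y (D \ A) : ℝ) / (D \ A).card := by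
  constructor
  · -- Accuracy
    have hfilt : D.filter (fun x => h x = y x) = A.filter (fun x => y x = false) := by
      ext x
      simp only [mem_filter]
      constructor
      · rintro ⟨hxD, hxy⟩
        by_cases hxA : x ∈ A
        · refine ⟨hxA, ?_⟩
          rw [hhA x hxA] at hxy
          exact hxy.symm
        · exfalso
          have hxB : x ∈ D \ A := mem_sdiff.mpr ⟨hxD, hxA⟩
          rw [hhB x hxB] at hxy
          cases y x <;> simp_all
      · rintro ⟨hxA, hxy⟩
        exact ⟨hSub hxA, by rw [hhA x hxA, hxy]⟩
    rw [Accuracy, NegCount, hfilt]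
  · -- SPD
    have h1 : A.filter (fun x => h x = true) = ∅ := by
      rw [filter_eq_empty_iff]
      intro x hx
      simp [hhA x hx]
    have h2 : (D \ A).filter (fun x => h x = true) = (D \ A).filter (fun x => y x = false) := by
      apply filter_congr
      intro x hx
      rw [hhB x hx]
      cases y x <;> simp
    have h3 : (D \ A).filter (fun x => y x = false) = (D \ A) \ ((D \ A).filter (fun x => y x = true)) := by
      ext x
      simp only [mem_filter, mem_sdiff]
      cases hy : y x <;> simp [hy] <;> tauto
    have hcardB : (0:ℝ) < (D \ A).card := by
      exact_mod_cast card_pos.mpr hB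
    have hle : ((D \ A).filter (fun x => y x = true)).card ≤ (D \ A).card :=
      card_filter_le _ _
    rw [SPD, pPlus, pPlus, h1, h2, h3, card_sdiff_of_subset (filter_subset _ _)]
    rw [PosCount]
    push_cast [hle, card_empty]
    field_simp
    ring
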